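/- Suppose f : ℝ^d → ℝ is twice differentiable, μ-strongly convex, and its Hessian is L₂-Lipschitz continuous, i.e., ‖∇²f(x) − ∇²f(y)‖ ≤ L₂‖x − y‖ for all x, y (operator norm). Then f is M-strongly self-concordant with M = L₂/μ^{3/2}, i.e., ∇²f(y) − ∇²f(x) ⪯ M‖y − x‖_{∇²f(z)}·∇²f(w) for all x, y, w, z ∈ ℝ^d, where ‖v‖_A = (vᵀAv)^{1/2}. -/
import Mathlib


open EuclideanSpace

/-- **Proposition 2.5**: a twice continuously differentiable, `μ`-strongly convex
function with `L₂`-Lipschitz Hessian is strongly self-concordant with constant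
`M = L₂/μ^{3/2}`, i.e.
`∇²f(y) − ∇²f(x) ⪯ (L₂/μ^{3/2}) ‖y − x‖_{∇²f(z)} ∇²f(w)` for all `x, y, w, z`,
expressed here via the Hessian bilinear form `iteratedFDeriv ℝ 2 f`. -/
theorem strongly_self_concordant_of_lipschitz_hessian {d : ℕ}
    (f : EuclideanSpace ℝ (Fin d) → ℝ) (hf : ContDiff ℝ 2 f)
    (μ L₂ : ℝ) (hμ : 0 < μ) (hL₂ : 0 ≤ L₂)
    (hconv : ∀ x u, μ * ‖u‖ ^ 2 ≤ iteratedFDeriv ℝ 2 f x ![u, u])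
    (hlip : ∀ x y, ‖iteratedFDeriv ℝ 2 f x - iteratedFDeriv ℝ 2 f y‖ ≤ L₂ * ‖x - y‖) :
    ∀ x y w z u : EuclideanSpace ℝ (Fin d),
      iteratedFDeriv ℝ 2 f y ![u, u] - iteratedFDeriv ℝ 2 f x ![u, u] ≤
        L₂ / μ ^ ((3 : ℝ) / 2) * Real.sqrt (iteratedFDeriv ℝ 2 f z ![y - x, y - x]) *
          iteratedFDeriv ℝ 2 f w ![u, u] := by
  intro x y w z u
  set A := iteratedFDeriv ℝ 2 f with hA
  have hsqμ : (0:ℝ) < Real.sqrt μ := Real.sqrt_pos.2 hμ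
  -- step 1
  have h1 : A y ![u, u] - A x ![u, u] ≤ L₂ * ‖y - x‖ * ‖u‖ ^ 2 := by
    have h0 : A y ![u, u] - A x ![u, u] = (A y - A x) ![u, u] := by
      simp [ContinuousMultilinearMap.sub_apply]
    have h2 := (A y - A x).le_opNorm ![u, u]
    have h3 : (A y - A x) ![u, u] ≤ ‖(A y - A x) ![u, u]‖ := le_abs_self _
    have h4 : (∏ i, ‖(![u, u] : Fin 2 → EuclideanSpace ℝ (Fin d)) i‖) = ‖u‖ ^ 2 := by
      simp [Fin.prod_univ_two, sq]
    have h5 : ‖A y - A x‖ ≤ L₂ * ‖y - x‖ := hlip y x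
    have h6 : (0:ℝ) ≤ ‖u‖ ^ 2 := sq_nonneg _
    rw [h0]
    calc (A y - A x) ![u, u] ≤ ‖A y - A x‖ * ‖u‖ ^ 2 := by
          rw [← h4]; exact h3.trans h2
      _ ≤ L₂ * ‖y - x‖ * ‖u‖ ^ 2 := by nlinarith [norm_nonneg (A y - A x)]
  -- step 2: ‖y - x‖ bound
  have hz := hconv z (y - x)
  have hz0 : (0:ℝ) ≤ A z ![y - x, y - x] := le_trans (by positivity) hz
  have h2 : Real.sqrt μ * ‖y - x‖ ≤ Real.sqrt (A z ![y - x, y - x]) := by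
    have := Real.sqrt_le_sqrt hz
    rwa [Real.sqrt_mul hμ.le, Real.sqrt_sq (norm_nonneg _)] at this
  -- step 3: ‖u‖² bound
  have hw := hconv w u
  have hw0 : (0:ℝ) ≤ A w ![u, u] := le_trans (by positivity) hw
  -- μ^{3/2} = μ * √μ
  have hpow : μ ^ ((3:ℝ)/2) = μ * Real.sqrt μ := by
    rw [show (3:ℝ)/2 = 1 + 1/2 by norm_num, Real.rpow_add hμ, Real.rpow_one,
      ← Real.sqrt_eq_rpow]
  rw [hpow]
  set s := Real.sqrt (A z ![y - x, y - x]) with hs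
  have hs0 : 0 ≤ s := Real.sqrt_nonneg _
  have key : L₂ * ‖y - x‖ * ‖u‖ ^ 2 ≤ L₂ / (μ * Real.sqrt μ) * s * A w ![u, u] := by
    rw [div_mul_eq_mul_div, div_mul_eq_mul_div, le_div_iff₀ (by positivity)]
    nlinarith [norm_nonneg (y - x), sq_nonneg (‖u‖), mul_le_mul_of_nonneg_left hw hL₂,
      mul_le_mul_of_nonneg_left h2 (mul_nonneg hL₂ (sq_nonneg ‖u‖)),
      mul_nonneg hL₂ (mul_nonneg hs0 (sq_nonneg ‖u‖))]
  exact h1.trans key
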